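/- Every element of the Apéry set Ap(M,Q) = M \ (Q + M), where Q = {(c/gcd(a,c))e₁, (c/gcd(b,c))e₂}, lies in the box [0, c/gcd(a,c)) × [0, c/gcd(b,c)); conversely every element of M in that box belongs to Ap(M,Q). -/
import Mathlib


/-- For `M = {(x,y) ∈ ℕ² : c ∣ ax + by}` and
`Q = {(c/gcd(a,c), 0), (0, c/gcd(b,c))}`, the Apéry set `M \ (Q + M)` equals the set of
elements of `M` lying in the box `[0, c/gcd(a,c)) × [0, c/gcd(b,c))`. -/
theorem stmt_1 (a b c : ℕ) (ha : 0 < a) (hb : 0 < b) (hc : 0 < c)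
    (M : Set (ℕ × ℕ)) (hM : M = {p | c ∣ a * p.1 + b * p.2})
    (q₁ q₂ : ℕ × ℕ) (hq₁ : q₁ = (c / Nat.gcd a c, 0)) (hq₂ : q₂ = (0, c / Nat.gcd b c)) :
    {m | m ∈ M ∧ ¬ ∃ q ∈ ({q₁, q₂} : Set (ℕ × ℕ)), ∃ x ∈ M, m = q + x}
      = {m | m ∈ M ∧ m.1 < c / Nat.gcd a c ∧ m.2 < c / Nat.gcd b c} := by
  set k₁ := c / Nat.gcd a c with hk₁
  set k₂ := c / Nat.gcd b c with hk₂
  have hck₁ : c ∣ a * k₁ := by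
    refine ⟨a / Nat.gcd a c, ?_⟩
    rw [hk₁, ← Nat.mul_div_assoc a (Nat.gcd_dvd_right a c),
      ← Nat.mul_div_assoc c (Nat.gcd_dvd_left a c), mul_comm]
  have hck₂ : c ∣ b * k₂ := by
    refine ⟨b / Nat.gcd b c, ?_⟩
    rw [hk₂, ← Nat.mul_div_assoc b (Nat.gcd_dvd_right b c),
      ← Nat.mul_div_assoc c (Nat.gcd_dvd_left b c), mul_comm]
  ext m
  simp only [Set.mem_setOf_eq, hM]
  constructor
  · rintro ⟨hm, hno⟩
    refine ⟨hm, ?_, ?_⟩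
    · by_contra h
      push_neg at h
      apply hno
      refine ⟨q₁, Or.inl rfl, (m.1 - k₁, m.2), ?_, ?_⟩
      · show c ∣ a * (m.1 - k₁) + b * m.2
        rw [← Int.natCast_dvd_natCast]
        push_cast [h]
        have h1 : (c:ℤ) ∣ a * m.1 + b * m.2 := by exact_mod_cast hm
        have h2 : (c:ℤ) ∣ a * k₁ := by exact_mod_cast hck₁
        have he : (a:ℤ) * (m.1 - k₁) + b * m.2 = (a * m.1 + b * m.2) - a * k₁ := by ring
        rw [he]
        exact dvd_sub h1 h2
      · rw [hq₁]
        ext <;> simp <;> omega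
    · by_contra h
      push_neg at h
      apply hno
      refine ⟨q₂, Or.inr rfl, (m.1, m.2 - k₂), ?_, ?_⟩
      · show c ∣ a * m.1 + b * (m.2 - k₂)
        rw [← Int.natCast_dvd_natCast]
        push_cast [h]
        have h1 : (c:ℤ) ∣ a * m.1 + b * m.2 := by exact_mod_cast hm
        have h2 : (c:ℤ) ∣ b * k₂ := by exact_mod_cast hck₂
        have he : (a:ℤ) * m.1 + b * (m.2 - k₂) = (a * m.1 + b * m.2) - b * k₂ := by ring
        rw [he]
        exact dvd_sub h1 h2
      · rw [hq₂]
        ext <;> simp <;> omega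
  · rintro ⟨hm, h1, h2⟩
    refine ⟨hm, ?_⟩
    rintro ⟨q, hq, x, hx, hmx⟩
    rcases hq with rfl | rfl
    · rw [hq₁] at hmx
      simp [Prod.ext_iff] at hmx
      omega
    · rw [hq₂] at hmx
      simp [Prod.ext_iff] at hmx
      omega
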